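/- For every x in the open unit ball B ⊂ ℝ^n (n ≥ 2), the Funk distance from the origin to x, defined as the infimum over all piecewise C¹ curves σ : [0,1] → B with σ(0) = 0 and σ(1) = x of the integral ∫₀¹ F_1(σ(t), σ'(t)) dt, equals −ln(1 − |x|). -/

import Mathlib

open Metric

open Set MeasureTheory intervalIntegral Topology Filter

/-- The Funk metric `F_1` on the unit ball of `ℝ^n`. -/
noncomputable def F1 (n : ℕ) (x y : EuclideanSpace ℝ (Fin n)) : ℝ :=
  (Real.sqrt (‖y‖ ^ 2 - (‖x‖ ^ 2 * ‖y‖ ^ 2 - (inner ℝ x y : ℝ) ^ 2)) + (inner ℝ x y : ℝ)) /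
    (1 - ‖x‖ ^ 2)

/-- A curve `σ : ℝ → ℝ^n` is piecewise `C¹` on `[0,1]` if it is continuous on `[0,1]`
and there is a partition `0 = t₀ < t₁ < ⋯ < t_k = 1` such that `σ` is `C¹` on each
subinterval `[tᵢ, tᵢ₊₁]`. -/
def PiecewiseC1On (n : ℕ) (σ : ℝ → EuclideanSpace ℝ (Fin n)) : Prop :=
  ContinuousOn σ (Set.Icc 0 1) ∧
  ∃ (k : ℕ) (t : Fin (k + 1) → ℝ), StrictMono t ∧ t 0 = 0 ∧ t (Fin.last k) = 1 ∧
    ∀ i : Fin k, ContDiffOn ℝ 1 σ (Set.Icc (t i.castSucc) (t i.succ))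

lemma F1_zero_left {n : ℕ} (w : EuclideanSpace ℝ (Fin n)) : F1 n 0 w = ‖w‖ := by
  simp [F1, Real.sqrt_sq (norm_nonneg w)]

lemma key_ineq {n : ℕ} (v w : EuclideanSpace ℝ (Fin n)) (hv : ‖v‖ < 1) :
    (if ‖v‖ = 0 then ‖w‖ else (inner ℝ v w : ℝ) / ‖v‖) / (1 - ‖v‖) ≤ F1 n v w := by
  split_ifs with h0
  · rw [norm_eq_zero] at h0; subst h0; simp [F1_zero_left]
  · set r := ‖v‖ with hr'
    set s := (inner ℝ v w : ℝ) with hs'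
    have hr : 0 < r := lt_of_le_of_ne (norm_nonneg v) (Ne.symm h0)
    have hs : |s| ≤ r * ‖w‖ := by
      exact abs_real_inner_le_norm v w
    have h1 : s^2 ≤ r^2*‖w‖^2 := by nlinarith [abs_nonneg s, sq_abs s]
    have hA : (|s|/r)^2 ≤ ‖w‖^2 - (r^2*‖w‖^2 - s^2) := by
      have h2 : (|s|/r)^2 = s^2/r^2 := by rw [div_pow, sq_abs]
      rw [h2, div_le_iff₀ (by positivity)]
      nlinarith [mul_nonneg (by nlinarith : (0:ℝ) ≤ 1 - r^2) (sub_nonneg.mpr h1)]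
    have hsqrt : |s|/r ≤ Real.sqrt (‖w‖^2 - (r^2*‖w‖^2 - s^2)) := by
      calc |s|/r = Real.sqrt ((|s|/r)^2) := (Real.sqrt_sq (by positivity)).symm
        _ ≤ _ := Real.sqrt_le_sqrt hA
    have hr2 : (0:ℝ) < 1 - r^2 := by nlinarith
    have h3 : s/r/(1-r) ≤ (|s|/r + s)/(1-r^2) := by
      rw [div_div, div_add' _ _ _ (ne_of_gt hr), div_div, div_le_div_iff₀ (by nlinarith) (by positivity)]
      have h4 : 0 ≤ r*(1-r)*(|s|-s) :=
        mul_nonneg (mul_nonneg hr.le (by linarith)) (by linarith [le_abs_self s])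
      nlinarith [h4]
    calc s/r/(1-r) ≤ (|s|/r + s)/(1-r^2) := h3
      _ ≤ _ := by
          rw [F1]
          gcongr

lemma piece_bound {n : ℕ} (σ : ℝ → EuclideanSpace ℝ (Fin n)) (a b : ℝ) (hab : a < b)
    (hσ : ContDiffOn ℝ 1 σ (Set.Icc a b))
    (hball : ∀ t ∈ Set.Icc a b, ‖σ t‖ < 1) :
    IntervalIntegrable (fun t => F1 n (σ t) (deriv σ t)) volume a b ∧
      Real.log (1 - ‖σ a‖) - Real.log (1 - ‖σ b‖) ≤
        ∫ t in a..b, F1 n (σ t) (deriv σ t) := by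
  set w := derivWithin σ (Icc a b) with hw
  have hUD : UniqueDiffOn ℝ (Icc a b) := uniqueDiffOn_Icc hab
  have hwc : ContinuousOn w (Icc a b) := hσ.continuousOn_derivWithin hUD le_rfl
  have hσc : ContinuousOn σ (Icc a b) := hσ.continuousOn
  set p : ℝ → ℝ := fun s => min b (max a s) with hp
  have hpmem : ∀ s, p s ∈ Icc a b := fun s => ⟨le_min hab.le (le_max_left _ _), min_le_left _ _⟩
  have hpeq : ∀ s ∈ Icc a b, p s = s := fun s hs => by
    simp only [hp, max_eq_right hs.1, min_eq_right hs.2]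
  have hpc : Continuous p := continuous_const.min (continuous_const.max continuous_id)
  have hσt : Continuous (fun s => σ (p s)) := hσc.comp_continuous hpc hpmem
  have hwt : Continuous (fun s => w (p s)) := hwc.comp_continuous hpc hpmem
  have hb1 : ∀ s, ‖σ (p s)‖ < 1 := fun s => hball _ (hpmem s)
  have hden : ∀ s : ℝ, (1 : ℝ) - ‖σ (p s)‖ ^ 2 ≠ 0 := fun s => by
    nlinarith [norm_nonneg (σ (p s)), hb1 s]
  have h1r : ∀ s : ℝ, (1 : ℝ) - ‖σ (p s)‖ ≠ 0 := fun s => by have := hb1 s; intro h; linarith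
  have c1 : Continuous fun s => ‖σ (p s)‖ := hσt.norm
  have c2 : Continuous fun s => ‖w (p s)‖ := hwt.norm
  have c3 : Continuous fun s => (inner ℝ (σ (p s)) (w (p s)) : ℝ) := hσt.inner hwt
  set ψ : ℝ → ℝ := fun s => F1 n (σ (p s)) (w (p s)) with hψ
  have hψc : Continuous ψ :=
    (((Real.continuous_sqrt.comp
        ((c2.pow 2).sub (((c1.pow 2).mul (c2.pow 2)).sub (c3.pow 2)))).add c3).div
      (continuous_const.sub (c1.pow 2)) hden)
  set I : ℝ → ℝ := fun u => ∫ s in a..u, ψ s with hI'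
  have hIder : ∀ u : ℝ, HasDerivAt I (ψ u) u := fun u =>
    intervalIntegral.integral_hasDerivAt_right (hψc.intervalIntegrable a u)
      (hψc.stronglyMeasurableAtFilter _ _) hψc.continuousAt
  set f : ℝ → ℝ := fun u => -(Real.log (1 - ‖σ (p u)‖) + I u) with hf
  set D : ℝ → ℝ := fun u =>
    if ‖σ (p u)‖ = 0 then ‖w (p u)‖ else (inner ℝ (σ (p u)) (w (p u)) : ℝ) / ‖σ (p u)‖ with hD
  set f' : ℝ → ℝ := fun u => -((1 - ‖σ (p u)‖)⁻¹ * -(D u) + ψ u) with hf'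
  have hfc : Continuous f :=
    (((continuous_const.sub c1).log h1r).add (continuous_iff_continuousAt.mpr
      fun u => (hIder u).continuousAt)).neg
  -- right derivative of f at every point of [a,b)
  have hder : ∀ u ∈ Ico a b, HasDerivWithinAt f (f' u) (Ici u) u := by
    intro u hu
    have hum : u ∈ Icc a b := ⟨hu.1, hu.2.le⟩
    have hpu : p u = u := hpeq u hum
    have hσd : HasDerivWithinAt σ (w u) (Icc a b) u :=
      ((hσ.differentiableOn one_ne_zero) u hum).hasDerivWithinAt
    have h2 : HasDerivWithinAt (fun s => σ (p s)) (w u) (Icc a b) u :=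
      hσd.congr (fun y hy => by rw [hpeq y hy]) (by rw [hpu])
    have h3 : HasDerivWithinAt (fun s => σ (p s)) (w u) (Ici u) u :=
      h2.mono_of_mem_nhdsWithin (Icc_mem_nhdsGE_of_mem hu)
    have hrd : HasDerivWithinAt (fun s => ‖σ (p s)‖) (D u) (Ici u) u := by
      by_cases h0 : ‖σ (p u)‖ = 0
      · simp only [hD]; rw [if_pos h0, hpu]
        have h0' : σ (p u) = 0 := norm_eq_zero.mp h0
        rw [hasDerivWithinAt_iff_tendsto_slope] at h3 ⊢
        have hT : Filter.Tendsto (fun z => ‖slope (fun s => σ (p s)) u z‖)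
            (𝓝[(Ici u) \ {u}] u) (𝓝 ‖w u‖) := h3.norm
        have hEE : (fun z => ‖slope (fun s => σ (p s)) u z‖)
            =ᶠ[𝓝[(Ici u) \ {u}] u] slope (fun s => ‖σ (p s)‖) u := by
          filter_upwards [self_mem_nhdsWithin] with z hz
          have hzu : u < z := lt_of_le_of_ne hz.1 (Ne.symm hz.2)
          have hinv : (0:ℝ) < (z - u)⁻¹ := inv_pos.mpr (by linarith)
          rw [slope, slope, vsub_eq_sub, vsub_eq_sub, h0', sub_zero, norm_smul,
            Real.norm_eq_abs, abs_of_pos hinv, norm_zero, sub_zero, smul_eq_mul]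
        exact Filter.Tendsto.congr' hEE hT
      · simp only [hD]; rw [if_neg h0]
        have hu0 : (inner ℝ (σ (p u)) (σ (p u)) : ℝ) ≠ 0 := by
          rw [real_inner_self_eq_norm_sq]
          intro h; exact h0 (by nlinarith [norm_nonneg (σ (p u))])
        have hin : HasDerivWithinAt (fun s => (inner ℝ (σ (p s)) (σ (p s)) : ℝ))
            ((inner ℝ (σ (p u)) (w u) : ℝ) + (inner ℝ (w u) (σ (p u)) : ℝ)) (Ici u) u :=
          HasDerivWithinAt.inner ℝ h3 h3
        have hsq := (Real.hasDerivAt_sqrt hu0).comp_hasDerivWithinAt u hin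
        have heqf : (Real.sqrt ∘ fun s => (inner ℝ (σ (p s)) (σ (p s)) : ℝ))
            = fun s => ‖σ (p s)‖ := funext fun s => by
          simp only [Function.comp_apply, real_inner_self_eq_norm_sq,
            Real.sqrt_sq (norm_nonneg _)]
        rw [heqf] at hsq
        refine hsq.congr_deriv (Eq.symm ?_)
        rw [real_inner_self_eq_norm_sq, Real.sqrt_sq (norm_nonneg _),
          real_inner_comm (w u) (σ (p u)), hpu]
        have hn0 : ‖σ u‖ ≠ 0 := by rw [hpu] at h0; exact h0
        have halg : ∀ S R : ℝ, R ≠ 0 → S / R = 1/(2*R)*(S+S) := by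
          intro S R hR; field_simp; ring
        rw [real_inner_comm (w u) (σ u)]
        exact halg _ _ hn0
    have hlog : HasDerivWithinAt (fun s => Real.log (1 - ‖σ (p s)‖))
        ((1 - ‖σ (p u)‖)⁻¹ * -(D u)) (Ici u) u :=
      by have := (Real.hasDerivAt_log (h1r u)).comp_hasDerivWithinAt u (hrd.const_sub 1); exact this
    exact (hlog.add (hIder u).hasDerivWithinAt).neg
  
  have hbound : ∀ u ∈ Ico a b, f' u ≤ 0 := by
    intro u _
    have h := key_ineq (σ (p u)) (w (p u)) (hb1 u)
    have hψu : ψ u = F1 n (σ (p u)) (w (p u)) := by rw [hψ]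
    have hDu : D u = if ‖σ (p u)‖ = 0 then ‖w (p u)‖
        else (inner ℝ (σ (p u)) (w (p u)) : ℝ) / ‖σ (p u)‖ := by rw [hD]
    have hfu : f' u = -((1 - ‖σ (p u)‖)⁻¹ * -(D u) + ψ u) := by rw [hf']
    rw [hfu, hψu]
    rw [← hDu, div_eq_inv_mul] at h
    linarith
  have key : ∀ ⦃y⦄, y ∈ Icc a b → f y ≤ f a :=
    image_le_of_deriv_right_le_deriv_boundary (B := fun _ => f a) (B' := fun _ => 0)
      hfc.continuousOn hder le_rfl continuousOn_const
      (fun u _ => hasDerivWithinAt_const u _ (f a)) hbound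
  have hfb : f b ≤ f a := key (right_mem_Icc.mpr hab.le)
  have hpa : p a = a := hpeq a (left_mem_Icc.mpr hab.le)
  have hpb : p b = b := hpeq b (right_mem_Icc.mpr hab.le)
  have hmain : Real.log (1 - ‖σ a‖) - Real.log (1 - ‖σ b‖) ≤ I b := by
    have h1 : f b = -(Real.log (1 - ‖σ b‖) + I b) := by simp only [hf, hpb]
    have h2 : f a = -(Real.log (1 - ‖σ a‖) + I a) := by simp only [hf, hpa]
    have h3 : I a = 0 := intervalIntegral.integral_same
    rw [h1, h2, h3] at hfb
    linarith
  have hae : ∀ᵐ t ∂(volume : Measure ℝ), t ∈ Set.uIoc a b →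
      F1 n (σ t) (deriv σ t) = ψ t := by
    have hb0 : (volume : Measure ℝ) {b} = 0 := measure_singleton b
    have hb0' : ∀ᵐ t ∂(volume : Measure ℝ), t ∉ ({b} : Set ℝ) :=
      measure_eq_zero_iff_ae_notMem.mp hb0
    filter_upwards [hb0'] with t ht hmem
    rw [Set.uIoc_of_le hab.le] at hmem
    have htIoo : t ∈ Ioo a b := ⟨hmem.1, lt_of_le_of_ne hmem.2 (by simpa using ht)⟩
    have htm : t ∈ Icc a b := Ioo_subset_Icc_self htIoo
    have hIcc : Icc a b ∈ 𝓝 t := Icc_mem_nhds htIoo.1 htIoo.2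
    have hda : HasDerivAt σ (w t) t :=
      (((hσ.differentiableOn one_ne_zero) t htm).hasDerivWithinAt).hasDerivAt hIcc
    rw [hda.deriv, hψ]
    simp only [hpeq t htm]
  have haer0 : ∀ᵐ t ∂((volume : Measure ℝ).restrict (Set.uIoc a b)),
      F1 n (σ t) (deriv σ t) = ψ t := (ae_restrict_iff' measurableSet_uIoc).mpr hae
  have haer : (fun s => ψ s) =ᵐ[(volume : Measure ℝ).restrict (Set.uIoc a b)]
      fun t => F1 n (σ t) (deriv σ t) := haer0.mono fun t ht => ht.symm
  have hint : IntervalIntegrable (fun t => F1 n (σ t) (deriv σ t)) volume a b := by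
    rw [intervalIntegrable_iff]
    have h1 := hψc.intervalIntegrable (μ := (volume : Measure ℝ)) a b
    rw [intervalIntegrable_iff] at h1
    exact h1.congr haer
  refine ⟨hint, ?_⟩
  have hIeq : (∫ t in a..b, F1 n (σ t) (deriv σ t)) = I b := by
    simp only [hI']
    exact intervalIntegral.integral_congr_ae hae
  rw [hIeq]
  exact hmain

theorem stmt_8 (n : ℕ) (hn : 2 ≤ n)
    (x : EuclideanSpace ℝ (Fin n)) (hx : x ∈ ball (0 : EuclideanSpace ℝ (Fin n)) 1) :
    IsGLB {L : ℝ | ∃ σ : ℝ → EuclideanSpace ℝ (Fin n), PiecewiseC1On n σ ∧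
        (∀ t ∈ Set.Icc (0 : ℝ) 1, σ t ∈ ball (0 : EuclideanSpace ℝ (Fin n)) 1) ∧
        σ 0 = 0 ∧ σ 1 = x ∧ L = ∫ t in (0 : ℝ)..1, F1 n (σ t) (deriv σ t)}
      (-Real.log (1 - ‖x‖)) := by
  have hx1 : ‖x‖ < 1 := by rwa [mem_ball, dist_zero_right] at hx
  apply IsLeast.isGLB
  constructor
  · -- membership : the straight segment realizes the value
    refine ⟨fun s => s • x, ?_, ?_, by simp, by simp, ?_⟩
    · refine ⟨(continuous_id.smul continuous_const).continuousOn, 1, ![0, 1], ?_, ?_, ?_, ?_⟩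
      · refine Fin.strictMono_iff_lt_succ.mpr ?_
        intro i; fin_cases i; norm_num
      · simp
      · simp [Fin.last]
      · intro i
        exact (contDiff_id.smul contDiff_const).contDiffOn
    · intro s hs
      rw [mem_ball, dist_zero_right, norm_smul, Real.norm_eq_abs, abs_of_nonneg hs.1]
      nlinarith [hs.1, hs.2, norm_nonneg x, hx1]
    · -- integral computation
      have hd : ∀ s : ℝ, HasDerivAt (fun u : ℝ => u • x) x s := fun s => by
        simpa using (hasDerivAt_id s).smul_const x
      have hrw : (fun s : ℝ => F1 n (s • x) (deriv (fun u : ℝ => u • x) s))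
          = fun s : ℝ => F1 n (s • x) x := funext fun s => by rw [(hd s).deriv]
      rw [hrw]
      have hpos : ∀ s ∈ Set.uIcc (0:ℝ) 1, (0:ℝ) < 1 - s * ‖x‖ := by
        intro s hs
        rw [Set.uIcc_of_le zero_le_one] at hs
        nlinarith [hs.1, hs.2, norm_nonneg x, hx1]
      have hF : ∀ s ∈ Set.uIcc (0:ℝ) 1, F1 n (s • x) x = ‖x‖ / (1 - s * ‖x‖) := by
        intro s hs
        have h1 : (inner ℝ (s • x) x : ℝ) = s * ‖x‖^2 := by
          rw [real_inner_smul_left, real_inner_self_eq_norm_sq]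
        have h2 : ‖s • x‖^2 = s^2 * ‖x‖^2 := by
          rw [norm_smul, Real.norm_eq_abs, mul_pow, sq_abs]
        rw [Set.uIcc_of_le zero_le_one] at hs
        have hp := hpos s (by rw [Set.uIcc_of_le zero_le_one]; exact hs)
        have hp2 : (0:ℝ) < 1 + s * ‖x‖ := by nlinarith [hs.1, norm_nonneg x]
        rw [F1, h1, h2]
        have harg : ‖x‖^2 - (s^2*‖x‖^2 * ‖x‖^2 - (s*‖x‖^2)^2) = ‖x‖^2 := by ring
        rw [harg, Real.sqrt_sq (norm_nonneg x)]
        rw [div_eq_div_iff (by nlinarith) hp.ne']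
        ring
      rw [intervalIntegral.integral_congr hF]
      have hFd : ∀ s ∈ Set.uIcc (0:ℝ) 1,
          HasDerivAt (fun u : ℝ => -Real.log (1 - u * ‖x‖)) (‖x‖ / (1 - s * ‖x‖)) s := by
        intro s hs
        have hne := (hpos s hs).ne'
        have h1 : HasDerivAt (fun u : ℝ => 1 - u * ‖x‖) (-‖x‖) s := by
          simpa using ((hasDerivAt_id s).mul_const ‖x‖).const_sub 1
        have h2 := (Real.hasDerivAt_log hne).comp s h1
        exact h2.neg.congr_deriv (by ring)
      have hci : IntervalIntegrable (fun s : ℝ => ‖x‖ / (1 - s * ‖x‖)) volume 0 1 := by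
        apply ContinuousOn.intervalIntegrable
        exact continuousOn_const.div
          ((continuous_const.sub (continuous_id.mul continuous_const)).continuousOn)
          (fun s hs => (hpos s hs).ne')
      rw [intervalIntegral.integral_eq_sub_of_hasDerivAt hFd hci]
      simp
  · -- lower bound
    rintro L ⟨σ, ⟨hcont, k, t, hmono, ht0, ht1, hC1⟩, hball, h0, h1, rfl⟩
    have hk : 0 < k := by
      rcases Nat.eq_zero_or_pos k with hk0 | hk
      · exfalso; subst hk0
        rw [show (Fin.last 0) = 0 from rfl, ht0] at ht1; norm_num at ht1
      · exact hk
    set a : ℕ → ℝ := fun i => t ⟨min i k, Nat.lt_succ_of_le (min_le_right i k)⟩ with ha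
    have hmem : ∀ i : Fin (k+1), t i ∈ Set.Icc (0:ℝ) 1 := fun i =>
      ⟨ht0 ▸ hmono.monotone (Fin.zero_le i), ht1 ▸ hmono.monotone (Fin.le_last i)⟩
    have hai : ∀ i (hi : i < k), a i = t (Fin.castSucc ⟨i, hi⟩) := by
      intro i hi; simp only [ha]; congr 1
      ext; simp [min_eq_left hi.le]
    have hai1 : ∀ i (hi : i < k), a (i+1) = t (Fin.succ ⟨i, hi⟩) := by
      intro i hi; simp only [ha]; congr 1
      ext; simp [min_eq_left (Nat.succ_le_of_lt hi)]
    have hpiece : ∀ i, i < k →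
        IntervalIntegrable (fun s => F1 n (σ s) (deriv σ s)) volume (a i) (a (i+1)) ∧
        Real.log (1-‖σ (a i)‖) - Real.log (1-‖σ (a (i+1))‖) ≤
          ∫ s in a i..a (i+1), F1 n (σ s) (deriv σ s) := by
      intro i hi
      rw [hai i hi, hai1 i hi]
      have hlt : t (Fin.castSucc ⟨i,hi⟩) < t (Fin.succ ⟨i,hi⟩) :=
        hmono Fin.castSucc_lt_succ
      refine piece_bound σ _ _ hlt (hC1 ⟨i,hi⟩) (fun s hs => ?_)
      have hsub : s ∈ Set.Icc (0:ℝ) 1 :=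
        ⟨le_trans (hmem _).1 hs.1, le_trans hs.2 (hmem _).2⟩
      have := hball s hsub
      rwa [mem_ball, dist_zero_right] at this
    have hsum := intervalIntegral.sum_integral_adjacent_intervals
      (μ := volume) (a := a) (fun i hi => (hpiece i hi).1)
    have ha0 : a 0 = 0 := by
      simp only [ha]
      rw [show (⟨min 0 k, Nat.lt_succ_of_le (min_le_right 0 k)⟩ : Fin (k+1)) = 0 from by
        ext; simp]
      exact ht0
    have hak : a k = 1 := by
      simp only [ha]
      rw [show (⟨min k k, Nat.lt_succ_of_le (min_le_right k k)⟩ : Fin (k+1)) = Fin.last k from by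
        ext; simp [Fin.last]]
      exact ht1
    calc -Real.log (1-‖x‖)
        = Real.log (1-‖σ (a 0)‖) - Real.log (1-‖σ (a k)‖) := by
          rw [ha0, hak, h0, h1]; simp
      _ = ∑ i ∈ Finset.range k,
            (Real.log (1-‖σ (a i)‖) - Real.log (1-‖σ (a (i+1))‖)) :=
          (Finset.sum_range_sub' (fun i => Real.log (1-‖σ (a i)‖)) k).symm
      _ ≤ ∑ i ∈ Finset.range k, ∫ s in a i..a (i+1), F1 n (σ s) (deriv σ s) :=
          Finset.sum_le_sum fun i hi => (hpiece i (Finset.mem_range.mp hi)).2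
      _ = ∫ s in (0:ℝ)..1, F1 n (σ s) (deriv σ s) := by rw [hsum, ha0, hak]
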